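/- Let x be an irrational number that is not a Liouville number. Then there exists a constant C > 0 such that for all nonzero integers a, b with |ab| ≠ 1, (log|x| - log|x - a/b|)/log|ab| ≤ C. -/

import Mathlib

theorem stmt_13 (x : ℝ) (hx : Irrational x) (hL : ¬ Liouville x) :
    ∃ C : ℝ, 0 < C ∧ ∀ a b : ℤ, a ≠ 0 → b ≠ 0 → |a * b| ≠ 1 →
      (Real.log |x| - Real.log |x - (a : ℝ) / b|) / Real.log |(a : ℝ) * b| ≤ C := by
  rw [Liouville] at hL
  push_neg at hL
  obtain ⟨n, hn⟩ := hL
  have hxr := (irrational_iff_ne_rational x).mp hx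
  have hlog2 : (0:ℝ) < Real.log 2 := Real.log_pos (by norm_num)
  refine ⟨|Real.log (|x|)| / Real.log 2 + 2 * n + 1, by positivity, ?_⟩
  intro a b ha hb hab
  have hbR : (b:ℝ) ≠ 0 := Int.cast_ne_zero.mpr hb
  have h2Z : (2:ℤ) ≤ |a * b| :=
    (Int.one_le_abs (mul_ne_zero ha hb)).lt_of_ne (Ne.symm hab)
  have hD2 : (2:ℝ) ≤ |(a:ℝ) * b| := by
    have : ((|a * b| : ℤ) : ℝ) = |(a:ℝ) * b| := by push_cast; ring_nf
    rw [← this]; exact_mod_cast h2Z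
  have hDpos : 0 < Real.log |(a:ℝ) * b| := lt_of_lt_of_le hlog2
    (Real.log_le_log (by norm_num) hD2)
  have hlog2le : Real.log 2 ≤ Real.log |(a:ℝ) * b| :=
    Real.log_le_log (by norm_num) hD2
  obtain ⟨a', b', hb1, heq, hbb⟩ :
      ∃ a' b' : ℤ, 1 < b' ∧ (a:ℝ) / b = (a':ℝ) / b' ∧ (b':ℝ) = 2 * |(b:ℝ)| := by
    rcases hb.lt_or_gt with h | h
    · refine ⟨-2 * a, -2 * b, by omega, by push_cast; field_simp, ?_⟩
      have : (b:ℝ) < 0 := by exact_mod_cast h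
      push_cast
      rw [abs_of_neg this]; ring
    · refine ⟨2 * a, 2 * b, by omega, by push_cast; field_simp, ?_⟩
      have : (0:ℝ) < (b:ℝ) := by exact_mod_cast h
      push_cast
      rw [abs_of_pos this]
  have hb'pos : (0:ℝ) < (b':ℝ) := by exact_mod_cast (lt_trans one_pos hb1 : (0:ℤ) < b')
  have hlow : 1 / (b':ℝ) ^ n ≤ |x - (a:ℝ) / b| := by
    rw [heq]
    exact hn a' b' hb1 (hxr a' b' (by omega))
  have hEpos : 0 < |x - (a:ℝ) / b| := lt_of_lt_of_le (by positivity) hlow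
  have hlogE : -((n:ℝ) * Real.log (b':ℝ)) ≤ Real.log |x - (a:ℝ) / b| := by
    have := Real.log_le_log (by positivity) hlow
    rwa [one_div, Real.log_inv, Real.log_pow] at this
  have hb'le : Real.log (b':ℝ) ≤ 2 * Real.log |(a:ℝ) * b| := by
    have h1 : (1:ℝ) ≤ |(a:ℝ)| := by
      have : (1:ℤ) ≤ |a| := Int.one_le_abs ha
      have h' : ((|a| : ℤ) : ℝ) = |(a:ℝ)| := by push_cast; ring
      rw [← h']; exact_mod_cast this
    have h2' : (1:ℝ) ≤ |(b:ℝ)| := by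
      have : (1:ℤ) ≤ |b| := Int.one_le_abs hb
      have h' : ((|b| : ℤ) : ℝ) = |(b:ℝ)| := by push_cast; ring
      rw [← h']; exact_mod_cast this
    have habs : |(a:ℝ) * b| = |(a:ℝ)| * |(b:ℝ)| := abs_mul _ _
    have hle : (b':ℝ) ≤ |(a:ℝ) * b| ^ 2 := by
      rw [hbb]; nlinarith
    calc Real.log (b':ℝ) ≤ Real.log (|(a:ℝ) * b| ^ 2) := Real.log_le_log hb'pos hle
      _ = 2 * Real.log |(a:ℝ) * b| := by rw [Real.log_pow]; push_cast; ring
  have hxlog : Real.log |x| ≤ |Real.log (|x|)| := le_abs_self _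
  rw [div_le_iff₀ hDpos]
  have key1 : |Real.log (|x|)| / Real.log 2 * Real.log |(a:ℝ) * b| ≥ |Real.log (|x|)| := by
    have : |Real.log (|x|)| / Real.log 2 * Real.log 2 = |Real.log (|x|)| :=
      div_mul_cancel₀ _ (ne_of_gt hlog2)
    nlinarith [mul_le_mul_of_nonneg_left hlog2le
      (div_nonneg (abs_nonneg (Real.log |x|)) hlog2.le)]
  have key2 : (n:ℝ) * Real.log (b':ℝ) ≤ (n:ℝ) * (2 * Real.log |(a:ℝ) * b|) :=
    mul_le_mul_of_nonneg_left hb'le (Nat.cast_nonneg n)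
  nlinarith [hlogE, hxlog, key1, key2, hDpos]
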